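/- arXiv:1801.09028 — 6 statements merged into one kernel-verified Lean document; each statement's English description precedes it below -/
import Mathlib

section
/- Let n be a positive integer and w : {-1,1}^n → [0,∞) a weight function with nonempty support. For every β with 0 < β ≤ 1/3, the weighted Rademacher complexity satisfies R(w) ≥ log₂ w_min + (n·log₂(1−β) + log₂ Z(w) − log₂ w_min) / log₂((1−β)/β). -/
open Finset

/-- Map a boolean to the corresponding element of `{-1, 1} ⊆ ℝ`. -/
noncomputable def sgn (b : Bool) : ℝ := if b then 1 else -1

/-- Standard inner product on `ℝ^ι` restricted to the cube `{-1,1}^ι`. -/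
noncomputable def ip {ι : Type*} [Fintype ι] [DecidableEq ι] (c x : ι → Bool) : ℝ :=
  ∑ i, sgn (c i) * sgn (x i)

/-- `δ(c, w)`: the maximum over the support of `w` of `⟨c,x⟩ + log₂ w(x)`. -/
noncomputable def wdelta {ι : Type*} [Fintype ι] [DecidableEq ι] (c : ι → Bool) (w : (ι → Bool) → ℝ) : ℝ :=
  sSup {y : ℝ | ∃ x, 0 < w x ∧ y = ip c x + Real.logb 2 (w x)}

/-- The weighted Rademacher complexity `R(w) = E_c[δ(c,w)]`, `c` uniform on the cube. -/
noncomputable def wRad {ι : Type*} [Fintype ι] [DecidableEq ι] (w : (ι → Bool) → ℝ) : ℝ :=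
  (∑ c : ι → Bool, wdelta c w) / 2 ^ (Fintype.card ι)

/-- `Z(w)`: the total weight. -/
noncomputable def Zw {ι : Type*} [Fintype ι] [DecidableEq ι] (w : (ι → Bool) → ℝ) : ℝ := ∑ x, w x

/-- `w_min`: the smallest positive weight. -/
noncomputable def wmin {ι : Type*} [Fintype ι] [DecidableEq ι] (w : (ι → Bool) → ℝ) : ℝ :=
  sInf {y : ℝ | ∃ x, 0 < w x ∧ y = w x}

/-- `w_max`: the largest weight. -/
noncomputable def wmax {ι : Type*} [Fintype ι] [DecidableEq ι] (w : (ι → Bool) → ℝ) : ℝ :=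
  sSup {y : ℝ | ∃ x, y = w x}
lemma sgn_mul_self (b : Bool) : sgn b * sgn b = 1 := by cases b <;> norm_num [sgn]

lemma ip_cons {n : ℕ} (a b : Bool) (c x : Fin n → Bool) :
    ip (Fin.cons a c) (Fin.cons b x) = sgn a * sgn b + ip c x := by
  simp [ip, Fin.sum_univ_succ]

lemma sum_cons_split {n : ℕ} (f : (Fin (n+1) → Bool) → ℝ) :
    ∑ c, f c = ∑ c' : Fin n → Bool, (f (Fin.cons false c') + f (Fin.cons true c')) := by
  rw [← Fintype.sum_equiv (Fin.consEquiv fun _ => Bool) (fun p => f (Fin.cons p.1 p.2)) f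
    (fun p => rfl)]
  rw [Fintype.sum_prod_type_right]
  exact Finset.sum_congr rfl fun c' _ => by rw [Fintype.sum_bool]; ring

lemma card_cube (n : ℕ) : (Finset.univ : Finset (Fin n → Bool)).card = 2 ^ n := by
  simp [Fintype.card_fun]

lemma heavy_side {n : ℕ} (β t : ℝ) (hβ1' : 0 < 1 - β) (ht0 : 0 < t)
    (w : (Fin (n+1) → Bool) → ℝ) (b : Bool)
    (hZpos : 0 < ∑ x, w x)
    (hZb : (1 - β) * (∑ x, w x) ≤ ∑ x' : Fin n → Bool, w (Fin.cons b x'))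
    (X' : (Fin n → Bool) → (Fin n → Bool))
    (hpos : ∀ c', 0 < w (Fin.cons b (X' c')))
    (hX' : (2:ℝ)^n * (t * Real.logb 2 (∑ x' : Fin n → Bool, w (Fin.cons b x'))
            + n * (t * Real.logb 2 (1-β)))
          ≤ ∑ c' : Fin n → Bool, (ip c' (X' c') + t * Real.logb 2 (w (Fin.cons b (X' c'))))) :
    ∃ X : (Fin (n+1) → Bool) → (Fin (n+1) → Bool),
      (∀ c, 0 < w (X c)) ∧
      (2:ℝ)^(n+1) * (t * Real.logb 2 (∑ x, w x) + ((n+1 : ℕ) : ℝ) * (t * Real.logb 2 (1-β)))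
        ≤ ∑ c, (ip c (X c) + t * Real.logb 2 (w (X c))) := by
  push_cast
  refine ⟨fun c => Fin.cons b (X' (Fin.tail c)), fun c => hpos _, ?_⟩
  have hsplit : ∑ c : Fin (n+1) → Bool,
      (ip c (Fin.cons b (X' (Fin.tail c))) + t * Real.logb 2 (w (Fin.cons b (X' (Fin.tail c)))))
      = 2 * ∑ c' : Fin n → Bool, (ip c' (X' c') + t * Real.logb 2 (w (Fin.cons b (X' c')))) := by
    rw [sum_cons_split (fun c => ip c (Fin.cons b (X' (Fin.tail c)))
      + t * Real.logb 2 (w (Fin.cons b (X' (Fin.tail c))))), Finset.mul_sum]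
    refine Finset.sum_congr rfl fun c' _ => ?_
    simp only [Fin.tail_cons, ip_cons]
    have h0 : sgn false * sgn b + sgn true * sgn b = 0 := by cases b <;> norm_num [sgn]
    nlinarith [h0]
  rw [hsplit]
  have hZb' : 0 < ∑ x' : Fin n → Bool, w (Fin.cons b x') :=
    lt_of_lt_of_le (by positivity) hZb
  have hlog : Real.logb 2 (1-β) + Real.logb 2 (∑ x, w x)
      ≤ Real.logb 2 (∑ x' : Fin n → Bool, w (Fin.cons b x')) := by
    rw [← Real.logb_mul (ne_of_gt hβ1') (ne_of_gt hZpos)]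
    exact Real.logb_le_logb_of_le one_lt_two (by positivity) hZb
  have hmul := mul_le_mul_of_nonneg_left hlog ht0.le
  have h2n : (0:ℝ) < 2^n := by positivity
  calc (2:ℝ)^(n+1) * (t * Real.logb 2 (∑ x, w x) + ((n:ℝ)+1) * (t * Real.logb 2 (1-β)))
      = 2 * ((2:ℝ)^n * (t * (Real.logb 2 (1-β) + Real.logb 2 (∑ x, w x))
          + n * (t * Real.logb 2 (1-β)))) := by push_cast; ring
    _ ≤ 2 * ((2:ℝ)^n * (t * Real.logb 2 (∑ x' : Fin n → Bool, w (Fin.cons b x'))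
          + n * (t * Real.logb 2 (1-β)))) := by nlinarith [mul_le_mul_of_nonneg_left hmul h2n.le]
    _ ≤ 2 * ∑ c' : Fin n → Bool, (ip c' (X' c') + t * Real.logb 2 (w (Fin.cons b (X' c')))) := by
        linarith [hX']

lemma balanced_side {n : ℕ} (β t : ℝ) (hβ0 : 0 < β) (hβ1' : 0 < 1 - β) (ht0 : 0 < t)
    (htL : t * (Real.logb 2 (1-β) - Real.logb 2 β) ≤ 2)
    (w : (Fin (n+1) → Bool) → ℝ)
    (hZpos : 0 < ∑ x, w x)
    (hZ0 : β * (∑ x, w x) ≤ ∑ x' : Fin n → Bool, w (Fin.cons false x'))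
    (hZ1 : β * (∑ x, w x) ≤ ∑ x' : Fin n → Bool, w (Fin.cons true x'))
    (X0 X1 : (Fin n → Bool) → (Fin n → Bool))
    (hpos0 : ∀ c', 0 < w (Fin.cons false (X0 c')))
    (hpos1 : ∀ c', 0 < w (Fin.cons true (X1 c')))
    (hX0 : (2:ℝ)^n * (t * Real.logb 2 (∑ x' : Fin n → Bool, w (Fin.cons false x'))
            + n * (t * Real.logb 2 (1-β)))
          ≤ ∑ c' : Fin n → Bool, (ip c' (X0 c') + t * Real.logb 2 (w (Fin.cons false (X0 c')))))
    (hX1 : (2:ℝ)^n * (t * Real.logb 2 (∑ x' : Fin n → Bool, w (Fin.cons true x'))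
            + n * (t * Real.logb 2 (1-β)))
          ≤ ∑ c' : Fin n → Bool, (ip c' (X1 c') + t * Real.logb 2 (w (Fin.cons true (X1 c'))))) :
    ∃ X : (Fin (n+1) → Bool) → (Fin (n+1) → Bool),
      (∀ c, 0 < w (X c)) ∧
      (2:ℝ)^(n+1) * (t * Real.logb 2 (∑ x, w x) + ((n+1 : ℕ) : ℝ) * (t * Real.logb 2 (1-β)))
        ≤ ∑ c, (ip c (X c) + t * Real.logb 2 (w (X c))) := by
  refine ⟨fun c => Fin.cons (c 0) (cond (c 0) (X1 (Fin.tail c)) (X0 (Fin.tail c))), ?_, ?_⟩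
  · intro c
    rcases hb : c 0 with _ | _
    · simpa [hb] using hpos0 (Fin.tail c)
    · simpa [hb] using hpos1 (Fin.tail c)
  · have hsplit : ∑ c : Fin (n+1) → Bool,
        (ip c (Fin.cons (c 0) (cond (c 0) (X1 (Fin.tail c)) (X0 (Fin.tail c))))
          + t * Real.logb 2 (w (Fin.cons (c 0) (cond (c 0) (X1 (Fin.tail c)) (X0 (Fin.tail c))))))
        = (2:ℝ)^(n+1)
          + ((∑ c' : Fin n → Bool, (ip c' (X0 c') + t * Real.logb 2 (w (Fin.cons false (X0 c')))))
          + (∑ c' : Fin n → Bool, (ip c' (X1 c') + t * Real.logb 2 (w (Fin.cons true (X1 c')))))) := by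
      rw [sum_cons_split (fun c => ip c (Fin.cons (c 0) (cond (c 0) (X1 (Fin.tail c)) (X0 (Fin.tail c))))
          + t * Real.logb 2 (w (Fin.cons (c 0) (cond (c 0) (X1 (Fin.tail c)) (X0 (Fin.tail c))))))]
      have h2 : (2:ℝ)^(n+1) = ∑ _c' : Fin n → Bool, (2:ℝ) := by
        rw [Finset.sum_const, card_cube]; push_cast; ring
      rw [h2, ← Finset.sum_add_distrib, ← Finset.sum_add_distrib]
      refine Finset.sum_congr rfl fun c' _ => ?_
      simp only [Fin.cons_zero, Fin.tail_cons, Bool.cond_false, Bool.cond_true, ip_cons,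
        sgn_mul_self]
      ring
    rw [hsplit]
    have hZ0' : 0 < ∑ x' : Fin n → Bool, w (Fin.cons false x') :=
      lt_of_lt_of_le (mul_pos hβ0 hZpos) hZ0
    have hZ1' : 0 < ∑ x' : Fin n → Bool, w (Fin.cons true x') :=
      lt_of_lt_of_le (mul_pos hβ0 hZpos) hZ1
    have hadd : ∑ x, w x = (∑ x' : Fin n → Bool, w (Fin.cons false x'))
        + (∑ x' : Fin n → Bool, w (Fin.cons true x')) := by
      rw [sum_cons_split w, Finset.sum_add_distrib]
    have hZZ : β * (1-β) * ((∑ x, w x) * (∑ x, w x))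
        ≤ (∑ x' : Fin n → Bool, w (Fin.cons false x'))
          * (∑ x' : Fin n → Bool, w (Fin.cons true x')) := by
      nlinarith [mul_nonneg (sub_nonneg.2 hZ0) (sub_nonneg.2 hZ1), hadd]
    have hlog : Real.logb 2 β + Real.logb 2 (1-β)
        + (Real.logb 2 (∑ x, w x) + Real.logb 2 (∑ x, w x))
        ≤ Real.logb 2 (∑ x' : Fin n → Bool, w (Fin.cons false x'))
          + Real.logb 2 (∑ x' : Fin n → Bool, w (Fin.cons true x')) := by
      have h := Real.logb_le_logb_of_le one_lt_two
        (mul_pos (mul_pos hβ0 hβ1') (mul_pos hZpos hZpos)) hZZ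
      rwa [Real.logb_mul (ne_of_gt (mul_pos hβ0 hβ1')) (ne_of_gt (mul_pos hZpos hZpos)),
        Real.logb_mul (ne_of_gt hβ0) (ne_of_gt hβ1'),
        Real.logb_mul (ne_of_gt hZpos) (ne_of_gt hZpos),
        Real.logb_mul (ne_of_gt hZ0') (ne_of_gt hZ1')] at h
    have h2n : (0:ℝ) < 2^n := by positivity
    have hlin : 2*(t*Real.logb 2 (∑ x, w x)) + 2*(t*Real.logb 2 (1-β))
        ≤ 2 + t * Real.logb 2 (∑ x' : Fin n → Bool, w (Fin.cons false x'))
          + t * Real.logb 2 (∑ x' : Fin n → Bool, w (Fin.cons true x')) := by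
      nlinarith [mul_le_mul_of_nonneg_left hlog ht0.le, htL]
    push_cast
    calc (2:ℝ)^(n+1) * (t * Real.logb 2 (∑ x, w x) + ((n:ℝ)+1) * (t * Real.logb 2 (1-β)))
        = 2^n * (2*(t*Real.logb 2 (∑ x, w x)) + 2*(t*Real.logb 2 (1-β)))
          + (2^n * ((n:ℝ)*(t*Real.logb 2 (1-β))) + 2^n * ((n:ℝ)*(t*Real.logb 2 (1-β)))) := by
          ring
      _ ≤ 2^n * (2 + t * Real.logb 2 (∑ x' : Fin n → Bool, w (Fin.cons false x'))
            + t * Real.logb 2 (∑ x' : Fin n → Bool, w (Fin.cons true x')))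
          + (2^n * ((n:ℝ)*(t*Real.logb 2 (1-β))) + 2^n * ((n:ℝ)*(t*Real.logb 2 (1-β)))) := by
          exact add_le_add_left (mul_le_mul_of_nonneg_left hlin h2n.le) _
      _ = 2^(n+1)
          + ((2:ℝ)^n * (t * Real.logb 2 (∑ x' : Fin n → Bool, w (Fin.cons false x'))
              + (n:ℝ) * (t * Real.logb 2 (1-β)))
           + (2:ℝ)^n * (t * Real.logb 2 (∑ x' : Fin n → Bool, w (Fin.cons true x'))
              + (n:ℝ) * (t * Real.logb 2 (1-β)))) := by ring
      _ ≤ 2^(n+1)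
          + ((∑ c' : Fin n → Bool, (ip c' (X0 c') + t * Real.logb 2 (w (Fin.cons false (X0 c')))))
           + (∑ c' : Fin n → Bool, (ip c' (X1 c') + t * Real.logb 2 (w (Fin.cons true (X1 c')))))) :=
          add_le_add_right (add_le_add hX0 hX1) _

lemma key (β t : ℝ) (hβ0 : 0 < β) (hβ2 : β ≤ 1/2) (ht0 : 0 < t)
    (htL : t * (Real.logb 2 (1-β) - Real.logb 2 β) ≤ 2) :
    ∀ (n : ℕ) (w : (Fin n → Bool) → ℝ), (∀ x, 0 ≤ w x) → 0 < ∑ x, w x →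
    ∃ X : (Fin n → Bool) → (Fin n → Bool),
      (∀ c, 0 < w (X c)) ∧
      (2:ℝ)^n * (t * Real.logb 2 (∑ x, w x) + n * (t * Real.logb 2 (1-β)))
        ≤ ∑ c, (ip c (X c) + t * Real.logb 2 (w (X c))) := by
  intro n
  induction n with
  | zero =>
    intro w hw hZ
    have hone : ∀ c : Fin 0 → Bool, ∑ x, w x = w c := fun c =>
      (Fintype.sum_unique w).trans (congrArg w (Subsingleton.elim _ c))
    refine ⟨fun c => c, fun c => (hone c) ▸ hZ, ?_⟩
    rw [Fintype.sum_unique (fun c => ip c c + t * Real.logb 2 (w c)),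
      hone (default : Fin 0 → Bool)]
    simp only [ip, Finset.univ_eq_empty, Finset.sum_empty, pow_zero, Nat.cast_zero, one_mul,
      zero_mul, add_zero, zero_add]
    exact le_of_eq (congrArg (fun z => t * Real.logb 2 (w z)) (Subsingleton.elim _ _))
  | succ n IH =>
    intro w hw hZ
    have hβ1' : 0 < 1 - β := by linarith
    have hadd : ∑ x, w x = (∑ x' : Fin n → Bool, w (Fin.cons false x'))
        + (∑ x' : Fin n → Bool, w (Fin.cons true x')) := by
      rw [sum_cons_split w, Finset.sum_add_distrib]
    by_cases hA : β * (∑ x, w x) ≤ ∑ x' : Fin n → Bool, w (Fin.cons false x')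
    · by_cases hB : β * (∑ x, w x) ≤ ∑ x' : Fin n → Bool, w (Fin.cons true x')
      · obtain ⟨X0, hpos0, hX0⟩ := IH (fun x' => w (Fin.cons false x')) (fun x' => hw _)
          (lt_of_lt_of_le (mul_pos hβ0 hZ) hA)
        obtain ⟨X1, hpos1, hX1⟩ := IH (fun x' => w (Fin.cons true x')) (fun x' => hw _)
          (lt_of_lt_of_le (mul_pos hβ0 hZ) hB)
        exact balanced_side β t hβ0 hβ1' ht0 htL w hZ hA hB X0 X1 hpos0 hpos1 hX0 hX1
      · push_neg at hB
        have hheavy : (1-β) * (∑ x, w x) ≤ ∑ x' : Fin n → Bool, w (Fin.cons false x') := by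
          nlinarith [hadd, hB]
        obtain ⟨X', hpos, hX'⟩ := IH (fun x' => w (Fin.cons false x')) (fun x' => hw _)
          (lt_of_lt_of_le (mul_pos hβ1' hZ) hheavy)
        exact heavy_side β t hβ1' ht0 w false hZ hheavy X' hpos hX'
    · push_neg at hA
      have hheavy : (1-β) * (∑ x, w x) ≤ ∑ x' : Fin n → Bool, w (Fin.cons true x') := by
        nlinarith [hadd, hA]
      obtain ⟨X', hpos, hX'⟩ := IH (fun x' => w (Fin.cons true x')) (fun x' => hw _)
        (lt_of_lt_of_le (mul_pos hβ1' hZ) hheavy)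
      exact heavy_side β t hβ1' ht0 w true hZ hheavy X' hpos hX'


theorem stmt0 (n : ℕ) (hn : 0 < n) (w : (Fin n → Bool) → ℝ)
    (hw : ∀ x, 0 ≤ w x) (hsupp : ∃ x, 0 < w x)
    (β : ℝ) (hβ0 : 0 < β) (hβ1 : β ≤ 1 / 3) :
    wRad w ≥ Real.logb 2 (wmin w) +
      ((n : ℝ) * Real.logb 2 (1 - β) + Real.logb 2 (Zw w) - Real.logb 2 (wmin w)) /
        Real.logb 2 ((1 - β) / β) := by
  have h2 : (1:ℝ) < 2 := one_lt_two
  have hβ1' : 0 < 1 - β := by linarith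
  have hZpos : 0 < ∑ x, w x := by
    obtain ⟨x0, hx0⟩ := hsupp
    exact Finset.sum_pos' (fun i _ => hw i) ⟨x0, Finset.mem_univ x0, hx0⟩
  have hLdef : Real.logb 2 ((1-β)/β) = Real.logb 2 (1-β) - Real.logb 2 β :=
    Real.logb_div (ne_of_gt hβ1') (ne_of_gt hβ0)
  have hL1 : 1 ≤ Real.logb 2 ((1-β)/β) := by
    have h2le : (2:ℝ) ≤ (1-β)/β := by
      rw [le_div_iff₀ hβ0]; linarith
    calc (1:ℝ) = Real.logb 2 2 := (Real.logb_self_eq_one h2).symm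
      _ ≤ _ := Real.logb_le_logb_of_le h2 two_pos h2le
  set L := Real.logb 2 ((1-β)/β) with hLs
  have hLpos : 0 < L := lt_of_lt_of_le one_pos hL1
  set t := L⁻¹ with ht
  have ht0 : 0 < t := inv_pos.2 hLpos
  have ht1 : t ≤ 1 := inv_le_one_of_one_le₀ hL1
  have htL : t * (Real.logb 2 (1-β) - Real.logb 2 β) ≤ 2 := by
    rw [← hLdef]
    have : t * L = 1 := inv_mul_cancel₀ (ne_of_gt hLpos)
    linarith
  obtain ⟨X, hXpos, hXsum⟩ := key β t hβ0 (by linarith) ht0 htL n w hw hZpos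
  -- facts about wmin
  have hSfin : {y : ℝ | ∃ x, 0 < w x ∧ y = w x}.Finite :=
    (Set.finite_range w).subset (by rintro y ⟨x, _, rfl⟩; exact ⟨x, rfl⟩)
  have hSne : {y : ℝ | ∃ x, 0 < w x ∧ y = w x}.Nonempty := by
    obtain ⟨x0, hx0⟩ := hsupp; exact ⟨w x0, x0, hx0, rfl⟩
  have hmem : wmin w ∈ {y : ℝ | ∃ x, 0 < w x ∧ y = w x} := hSne.csInf_mem hSfin
  have hwminpos : 0 < wmin w := by
    obtain ⟨x, hx, he⟩ := hmem
    rw [he] at *; exact hx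
  have hwmin_le : ∀ x, 0 < w x → wmin w ≤ w x := fun x hx =>
    csInf_le hSfin.bddBelow ⟨x, hx, rfl⟩
  -- wdelta lower bound per c
  have hdelta : ∀ c : Fin n → Bool, ip c (X c) + Real.logb 2 (w (X c)) ≤ wdelta c w := by
    intro c
    have hfin : {y : ℝ | ∃ x, 0 < w x ∧ y = ip c x + Real.logb 2 (w x)}.Finite :=
      (Set.finite_range (fun x => ip c x + Real.logb 2 (w x))).subset
        (by rintro y ⟨x, _, rfl⟩; exact ⟨x, rfl⟩)
    exact le_csSup hfin.bddAbove ⟨X c, hXpos c, rfl⟩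
  have hstep : ∀ c : Fin n → Bool,
      (ip c (X c) + t * Real.logb 2 (w (X c))) + (1-t) * Real.logb 2 (wmin w) ≤ wdelta c w := by
    intro c
    have hlogle : Real.logb 2 (wmin w) ≤ Real.logb 2 (w (X c)) :=
      Real.logb_le_logb_of_le h2 hwminpos (hwmin_le _ (hXpos c))
    have hd := hdelta c
    nlinarith [mul_le_mul_of_nonneg_left hlogle (by linarith : (0:ℝ) ≤ 1 - t)]
  have hsum2 : (∑ c, (ip c (X c) + t * Real.logb 2 (w (X c))))
      + (2:ℝ)^n * ((1-t) * Real.logb 2 (wmin w)) ≤ ∑ c, wdelta c w := by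
    have hs := Finset.sum_le_sum (fun c (_ : c ∈ Finset.univ) => hstep c)
    rw [Finset.sum_add_distrib, Finset.sum_const, card_cube, nsmul_eq_mul] at hs
    push_cast at hs ⊢
    linarith
  rw [ge_iff_le]
  unfold wRad
  rw [Fintype.card_fin, le_div_iff₀ (by positivity : (0:ℝ) < 2^n)]
  have hZwdef : Zw w = ∑ x, w x := rfl
  calc (Real.logb 2 (wmin w)
        + ((n : ℝ) * Real.logb 2 (1 - β) + Real.logb 2 (Zw w) - Real.logb 2 (wmin w)) / L) * 2^n
      = (2:ℝ)^n * (t * Real.logb 2 (∑ x, w x) + n * (t * Real.logb 2 (1-β)))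
        + (2:ℝ)^n * ((1-t) * Real.logb 2 (wmin w)) := by
        rw [hZwdef, div_eq_mul_inv, ← ht]; ring
    _ ≤ (∑ c, (ip c (X c) + t * Real.logb 2 (w (X c))))
        + (2:ℝ)^n * ((1-t) * Real.logb 2 (wmin w)) := add_le_add_left hXsum _
    _ ≤ ∑ c, wdelta c w := hsum2
end

section
/- Let n be a positive integer and w : {-1,1}^n → [0,∞) a weight function with nonempty support. For every β with 1/3 ≤ β < 1/2, the weighted Rademacher complexity satisfies R(w) ≥ log₂ w_max + (n·log₂(1−β) + log₂ Z(w) − log₂ w_max) / log₂((1−β)/β). -/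
open Finset

noncomputable def dH {n : ℕ} (c x : Fin n → Bool) : ℝ :=
  ∑ i, if c i = x i then 0 else 1

lemma dH_cons {n : ℕ} (ε b : Bool) (c' x' : Fin n → Bool) :
    dH (Fin.cons ε c') (Fin.cons b x') = (if ε = b then 0 else 1) + dH c' x' := by
  unfold dH
  rw [Fin.sum_univ_succ]
  simp

lemma inf'_const_add {α : Type*} (s : Finset α) (h : s.Nonempty) (f : α → ℝ) (k : ℝ) :
    s.inf' h (fun x => k + f x) = k + s.inf' h f := by
  apply le_antisymm
  · obtain ⟨x, hx, hfx⟩ := s.exists_mem_eq_inf' h f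
    rw [hfx]
    exact Finset.inf'_le _ hx
  · apply Finset.le_inf'
    intro b hb
    exact add_le_add le_rfl (Finset.inf'_le f hb)

lemma sup'_const_sub {α : Type*} (s : Finset α) (h : s.Nonempty) (f : α → ℝ) (k : ℝ) :
    s.sup' h (fun x => k - f x) = k - s.inf' h f := by
  apply le_antisymm
  · apply Finset.sup'_le
    intro b hb
    have := Finset.inf'_le f hb
    linarith
  · obtain ⟨x, hx, hfx⟩ := s.exists_mem_eq_inf' h f
    rw [hfx]
    exact Finset.le_sup' (fun x => k - f x) hx

lemma cube_sum_split (n : ℕ) (F : (Fin (n+1) → Bool) → ℝ) :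
    ∑ c, F c = ∑ c' : Fin n → Bool, (F (Fin.cons true c') + F (Fin.cons false c')) := by
  rw [← (Fin.consEquiv (fun _ : Fin (n+1) => Bool)).sum_comp F]
  rw [Fintype.sum_prod_type]
  rw [show (Finset.univ : Finset Bool) = {true, false} from Fintype.univ_bool]
  rw [Finset.sum_insert (by simp), Finset.sum_singleton, ← Finset.sum_add_distrib]
  simp [Fin.consEquiv]

lemma keyb {n : ℕ} (A : Finset (Fin (n+1) → Bool)) (hA : A.Nonempty)
    (ℓ : (Fin (n+1) → Bool) → ℝ) (b : Bool)
    (h' : (A.filter (fun x => x 0 = b)).Nonempty) (ε : Bool) (c' : Fin n → Bool) :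
    A.inf' hA (fun x => 2 * dH (Fin.cons ε c') x + ℓ x) ≤
      (if ε = b then 0 else 2) +
        ((A.filter (fun x => x 0 = b)).image Fin.tail).inf' (by exact h'.image Fin.tail)
          (fun x' => 2 * dH c' x' + ℓ (Fin.cons b x')) := by
  rw [Finset.inf'_image, ← inf'_const_add]
  obtain ⟨x, hx, hval⟩ := Finset.exists_mem_eq_inf' h'
      (fun x => (if ε = b then (0:ℝ) else 2) +
        ((fun x' => 2 * dH c' x' + ℓ (Fin.cons b x')) ∘ Fin.tail) x)
  rw [hval]
  have hx0 : x 0 = b := (Finset.mem_filter.mp hx).2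
  have hxA : x ∈ A := (Finset.mem_filter.mp hx).1
  have heq : 2 * dH (Fin.cons ε c') x + ℓ x
      = (if ε = b then (0:ℝ) else 2) + (2 * dH c' (Fin.tail x) + ℓ (Fin.cons b (Fin.tail x))) := by
    conv_lhs => rw [← Fin.cons_self_tail x]
    rw [hx0, dH_cons]
    by_cases hεb : ε = b <;> simp [hεb] <;> ring
  calc A.inf' hA (fun x => 2 * dH (Fin.cons ε c') x + ℓ x)
      ≤ 2 * dH (Fin.cons ε c') x + ℓ x := Finset.inf'_le _ hxA
    _ = _ := by rw [heq]; rfl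

lemma sideS {n : ℕ} (A : Finset (Fin (n+1) → Bool)) (ℓ : (Fin (n+1) → Bool) → ℝ) (b : Bool) :
    ∑ x' ∈ (A.filter (fun x => x 0 = b)).image Fin.tail, (2:ℝ) ^ (-(ℓ (Fin.cons b x'))) =
      ∑ x ∈ A.filter (fun x => x 0 = b), (2:ℝ) ^ (-ℓ x) := by
  rw [Finset.sum_image]
  · apply Finset.sum_congr rfl
    intro x hx
    have hx0 : x 0 = b := (Finset.mem_filter.mp hx).2
    rw [← hx0, Fin.cons_self_tail]
  · intro x hx y hy hxy
    have hx0 : x 0 = b := (Finset.mem_filter.mp hx).2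
    have hy0 : y 0 = b := (Finset.mem_filter.mp hy).2
    rw [← Fin.cons_self_tail x, ← Fin.cons_self_tail y, hx0, hy0, hxy]

set_option maxHeartbeats 2000000 in
lemma core (β : ℝ) (hβ0 : 1/3 ≤ β) (hβ1 : β < 1/2) (n : ℕ) :
    ∀ (A : Finset (Fin n → Bool)) (hA : A.Nonempty) (ℓ : (Fin n → Bool) → ℝ),
      (∀ x ∈ A, 0 ≤ ℓ x) →
      ∑ c : Fin n → Bool, A.inf' hA (fun x => 2 * dH c x + ℓ x) ≤
        2 ^ n * ((n : ℝ) - (Real.logb 2 (∑ x ∈ A, (2:ℝ) ^ (-ℓ x)) + (n : ℝ) * Real.logb 2 (1 - β)) /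
          Real.logb 2 ((1 - β) / β)) := by
  have hb0 : (0:ℝ) < β := by linarith
  have h1b : (0:ℝ) < 1 - β := by linarith
  have hq1 : 1 < (1 - β) / β := by rw [lt_div_iff₀ hb0]; linarith
  have hL : 0 < Real.logb 2 ((1 - β) / β) := Real.logb_pos (by norm_num) hq1
  have hLle : Real.logb 2 ((1 - β) / β) ≤ 1 := by
    have h2 : (1 - β) / β ≤ 2 := by rw [div_le_iff₀ hb0]; linarith
    calc Real.logb 2 ((1-β)/β) ≤ Real.logb 2 2 :=
          Real.logb_le_logb_of_le (by norm_num) (by positivity) h2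
      _ = 1 := Real.logb_self_eq_one (by norm_num)
  have hg : Real.logb 2 (1 - β) < 0 := Real.logb_neg (by norm_num) h1b (by linarith)
  have hLβ : Real.logb 2 ((1-β)/β) = Real.logb 2 (1-β) - Real.logb 2 β :=
    Real.logb_div (ne_of_gt h1b) (ne_of_gt hb0)
  induction n with
  | zero =>
    intro A hA ℓ hℓ
    obtain ⟨x₀, hx₀⟩ := id hA
    have hval : ∀ c : Fin 0 → Bool, A.inf' hA (fun x => 2 * dH c x + ℓ x) = ℓ x₀ := by
      intro c
      apply Finset.inf'_eq_of_forall
      intro x hx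
      have hxx : x = x₀ := funext fun i => i.elim0
      subst hxx
      have hd : dH c x = 0 := by unfold dH; simp
      rw [hd]; ring
    have hAone : A = {x₀} :=
      Finset.eq_singleton_iff_unique_mem.mpr ⟨hx₀, fun y _ => funext fun i => i.elim0⟩
    rw [Finset.sum_congr rfl (fun c _ => hval c), Finset.sum_const]
    rw [hAone, Finset.sum_singleton]
    have hcard : (Finset.univ : Finset (Fin 0 → Bool)).card = 1 := by simp
    rw [hcard, one_smul]
    rw [Real.logb_rpow (by norm_num) (by norm_num)]
    have h0 : 0 ≤ ℓ x₀ := hℓ x₀ hx₀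
    have hgoal : ℓ x₀ ≤ ℓ x₀ / Real.logb 2 ((1-β)/β) := by
      rw [le_div_iff₀ hL]; nlinarith
    push_cast
    rw [pow_zero, one_mul, zero_mul, add_zero, zero_sub, neg_div, neg_neg]
    exact hgoal
  | succ n ih =>
    intro A hA ℓ hℓ
    have hpow : (0:ℝ) < 2 ^ n := by positivity
    have hTsub : ∀ b : Bool, A.filter (fun x => x 0 = b) ⊆ A := fun b => Finset.filter_subset _ _
    have hsplitS : ∑ x ∈ A, (2:ℝ)^(-ℓ x)
        = (∑ x ∈ A.filter (fun x => x 0 = true), (2:ℝ)^(-ℓ x))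
          + ∑ x ∈ A.filter (fun x => x 0 = false), (2:ℝ)^(-ℓ x) := by
      have hfilt : A.filter (fun x => ¬ (x 0 = true)) = A.filter (fun x => x 0 = false) := by
        apply Finset.filter_congr
        intro x _
        simp
      rw [← Finset.sum_filter_add_sum_filter_not A (fun x => x 0 = true), hfilt]
    have hSpos : 0 < ∑ x ∈ A, (2:ℝ)^(-ℓ x) :=
      Finset.sum_pos (fun x _ => Real.rpow_pos_of_pos (by norm_num) _) hA
    have hSbpos : ∀ b : Bool, (A.filter (fun x => x 0 = b)).Nonempty →
        0 < ∑ x ∈ A.filter (fun x => x 0 = b), (2:ℝ)^(-ℓ x) :=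
      fun b hb => Finset.sum_pos (fun x _ => Real.rpow_pos_of_pos (by norm_num) _) hb
    -- child bound from the inductive hypothesis
    have child : ∀ (b : Bool) (h' : (A.filter (fun x => x 0 = b)).Nonempty),
        ∑ c' : Fin n → Bool, ((A.filter (fun x => x 0 = b)).image Fin.tail).inf' (h'.image Fin.tail)
            (fun x' => 2 * dH c' x' + ℓ (Fin.cons b x'))
          ≤ 2 ^ n * ((n : ℝ) - (Real.logb 2 (∑ x ∈ A.filter (fun x => x 0 = b), (2:ℝ)^(-ℓ x)) + (n:ℝ) * Real.logb 2 (1-β)) / Real.logb 2 ((1-β)/β)) := by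
      intro b h'
      have hnn : ∀ x' ∈ (A.filter (fun x => x 0 = b)).image Fin.tail, 0 ≤ ℓ (Fin.cons b x') := by
        intro x' hx'
        obtain ⟨x, hx, rfl⟩ := Finset.mem_image.mp hx'
        have hx0 : x 0 = b := (Finset.mem_filter.mp hx).2
        rw [← hx0, Fin.cons_self_tail]
        exact hℓ x (hTsub b hx)
      have hih := ih ((A.filter (fun x => x 0 = b)).image Fin.tail) (h'.image Fin.tail)
        (fun x' => ℓ (Fin.cons b x')) hnn
      rw [sideS A ℓ b] at hih
      exact hih
    -- Case A : one of the two halves carries at least a (1-β) fraction of the weight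
    have caseA : ∀ (b : Bool) (h' : (A.filter (fun x => x 0 = b)).Nonempty),
        (1 - β) * (∑ x ∈ A, (2:ℝ)^(-ℓ x)) ≤ (∑ x ∈ A.filter (fun x => x 0 = b), (2:ℝ)^(-ℓ x)) →
        ∑ c : Fin (n+1) → Bool, A.inf' hA (fun x => 2 * dH c x + ℓ x) ≤
          2 ^ (n+1) * (((n+1 : ℕ) : ℝ) - (Real.logb 2 (∑ x ∈ A, (2:ℝ)^(-ℓ x)) + ((n+1:ℕ):ℝ) * Real.logb 2 (1-β)) / Real.logb 2 ((1-β)/β)) := by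
      intro b h' hbig
      have hlog : Real.logb 2 (∑ x ∈ A, (2:ℝ)^(-ℓ x)) + Real.logb 2 (1-β) ≤
          Real.logb 2 (∑ x ∈ A.filter (fun x => x 0 = b), (2:ℝ)^(-ℓ x)) := by
        have h1 : Real.logb 2 ((1-β) * ∑ x ∈ A, (2:ℝ)^(-ℓ x)) ≤
            Real.logb 2 (∑ x ∈ A.filter (fun x => x 0 = b), (2:ℝ)^(-ℓ x)) :=
          Real.logb_le_logb_of_le (by norm_num) (by positivity) hbig
        rw [Real.logb_mul (ne_of_gt h1b) (ne_of_gt hSpos)] at h1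
        linarith
      rw [cube_sum_split]
      have hpt : ∀ c' : Fin n → Bool,
          A.inf' hA (fun x => 2 * dH (Fin.cons true c') x + ℓ x) +
          A.inf' hA (fun x => 2 * dH (Fin.cons false c') x + ℓ x)
            ≤ 2 * (((A.filter (fun x => x 0 = b)).image Fin.tail).inf' (h'.image Fin.tail)
                (fun x' => 2 * dH c' x' + ℓ (Fin.cons b x'))) + 2 := by
        intro c'
        have k1 := keyb A hA ℓ b h' true c'
        have k2 := keyb A hA ℓ b h' false c'
        cases b
        · rw [if_neg (by decide)] at k1
          rw [if_pos rfl] at k2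
          linarith
        · rw [if_pos rfl] at k1
          rw [if_neg (by decide)] at k2
          linarith
      calc ∑ c' : Fin n → Bool, (A.inf' hA (fun x => 2 * dH (Fin.cons true c') x + ℓ x) +
              A.inf' hA (fun x => 2 * dH (Fin.cons false c') x + ℓ x))
          ≤ ∑ c' : Fin n → Bool, (2 * (((A.filter (fun x => x 0 = b)).image Fin.tail).inf' (h'.image Fin.tail)
                (fun x' => 2 * dH c' x' + ℓ (Fin.cons b x'))) + 2) :=
            Finset.sum_le_sum (fun c' _ => hpt c')
        _ = 2 * (∑ c' : Fin n → Bool, ((A.filter (fun x => x 0 = b)).image Fin.tail).inf' (h'.image Fin.tail)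
                (fun x' => 2 * dH c' x' + ℓ (Fin.cons b x'))) + 2 * 2^n := by
            rw [Finset.sum_add_distrib, Finset.sum_const, Finset.mul_sum]
            have hcard : (Finset.univ : Finset (Fin n → Bool)).card = 2^n := by simp
            rw [hcard, nsmul_eq_mul]
            push_cast
            ring
        _ ≤ 2 * (2 ^ n * ((n : ℝ) - (Real.logb 2 (∑ x ∈ A.filter (fun x => x 0 = b), (2:ℝ)^(-ℓ x)) + (n:ℝ) * Real.logb 2 (1-β)) / Real.logb 2 ((1-β)/β))) + 2 * 2^n := by
            have := child b h'
            linarith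
        _ ≤ _ := by
            have hdiff : 2 ^ (n+1) * (((n+1:ℕ):ℝ) - (Real.logb 2 (∑ x ∈ A, (2:ℝ)^(-ℓ x)) + ((n+1:ℕ):ℝ) * Real.logb 2 (1-β)) / Real.logb 2 ((1-β)/β))
                - (2 * (2 ^ n * ((n : ℝ) - (Real.logb 2 (∑ x ∈ A.filter (fun x => x 0 = b), (2:ℝ)^(-ℓ x)) + (n:ℝ) * Real.logb 2 (1-β)) / Real.logb 2 ((1-β)/β))) + 2 * 2^n)
                = 2 * 2^n * ((Real.logb 2 (∑ x ∈ A.filter (fun x => x 0 = b), (2:ℝ)^(-ℓ x))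
                    - Real.logb 2 (∑ x ∈ A, (2:ℝ)^(-ℓ x)) - Real.logb 2 (1-β)) / Real.logb 2 ((1-β)/β)) := by
              push_cast
              rw [pow_succ]
              field_simp
              ring
            have hnum : 0 ≤ Real.logb 2 (∑ x ∈ A.filter (fun x => x 0 = b), (2:ℝ)^(-ℓ x))
                - Real.logb 2 (∑ x ∈ A, (2:ℝ)^(-ℓ x)) - Real.logb 2 (1-β) := by linarith
            have hq : 0 ≤ 2 * 2^n * ((Real.logb 2 (∑ x ∈ A.filter (fun x => x 0 = b), (2:ℝ)^(-ℓ x))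
                    - Real.logb 2 (∑ x ∈ A, (2:ℝ)^(-ℓ x)) - Real.logb 2 (1-β)) / Real.logb 2 ((1-β)/β)) := by
              apply mul_nonneg (by positivity)
              exact div_nonneg hnum hL.le
            linarith
    -- Case B : both halves carry at least a β fraction
    have caseB : ∀ (hT : (A.filter (fun x => x 0 = true)).Nonempty)
        (hF : (A.filter (fun x => x 0 = false)).Nonempty),
        β * (∑ x ∈ A, (2:ℝ)^(-ℓ x)) ≤ (∑ x ∈ A.filter (fun x => x 0 = true), (2:ℝ)^(-ℓ x)) →
        β * (∑ x ∈ A, (2:ℝ)^(-ℓ x)) ≤ (∑ x ∈ A.filter (fun x => x 0 = false), (2:ℝ)^(-ℓ x)) →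
        ∑ c : Fin (n+1) → Bool, A.inf' hA (fun x => 2 * dH c x + ℓ x) ≤
          2 ^ (n+1) * (((n+1 : ℕ) : ℝ) - (Real.logb 2 (∑ x ∈ A, (2:ℝ)^(-ℓ x)) + ((n+1:ℕ):ℝ) * Real.logb 2 (1-β)) / Real.logb 2 ((1-β)/β)) := by
      intro hT hF h1 h2
      have hβS : 0 < β * (∑ x ∈ A, (2:ℝ)^(-ℓ x)) := by positivity
      have hSTpos := hSbpos true hT
      have hSFpos := hSbpos false hF
      have hprod : (β * (∑ x ∈ A, (2:ℝ)^(-ℓ x))) * (β * (∑ x ∈ A, (2:ℝ)^(-ℓ x)))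
          ≤ (∑ x ∈ A.filter (fun x => x 0 = true), (2:ℝ)^(-ℓ x)) * (∑ x ∈ A.filter (fun x => x 0 = false), (2:ℝ)^(-ℓ x)) :=
        mul_le_mul h1 h2 hβS.le hSTpos.le
      have hlog2 : 2 * Real.logb 2 β + 2 * Real.logb 2 (∑ x ∈ A, (2:ℝ)^(-ℓ x))
          ≤ Real.logb 2 (∑ x ∈ A.filter (fun x => x 0 = true), (2:ℝ)^(-ℓ x))
            + Real.logb 2 (∑ x ∈ A.filter (fun x => x 0 = false), (2:ℝ)^(-ℓ x)) := by
        have hm := Real.logb_le_logb_of_le (b := 2) (by norm_num) (by positivity) hprod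
        rw [Real.logb_mul (ne_of_gt hβS) (ne_of_gt hβS),
            Real.logb_mul (ne_of_gt hSTpos) (ne_of_gt hSFpos),
            Real.logb_mul (ne_of_gt hb0) (ne_of_gt hSpos)] at hm
        linarith
      rw [cube_sum_split]
      have hptT : ∀ c' : Fin n → Bool,
          A.inf' hA (fun x => 2 * dH (Fin.cons true c') x + ℓ x)
            ≤ ((A.filter (fun x => x 0 = true)).image Fin.tail).inf' (hT.image Fin.tail)
                (fun x' => 2 * dH c' x' + ℓ (Fin.cons true x')) := by
        intro c'
        have k := keyb A hA ℓ true hT true c'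
        rw [if_pos rfl, zero_add] at k
        exact k
      have hptF : ∀ c' : Fin n → Bool,
          A.inf' hA (fun x => 2 * dH (Fin.cons false c') x + ℓ x)
            ≤ ((A.filter (fun x => x 0 = false)).image Fin.tail).inf' (hF.image Fin.tail)
                (fun x' => 2 * dH c' x' + ℓ (Fin.cons false x')) := by
        intro c'
        have k := keyb A hA ℓ false hF false c'
        rw [if_pos rfl, zero_add] at k
        exact k
      calc ∑ c' : Fin n → Bool, (A.inf' hA (fun x => 2 * dH (Fin.cons true c') x + ℓ x) +
              A.inf' hA (fun x => 2 * dH (Fin.cons false c') x + ℓ x))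
          ≤ ∑ c' : Fin n → Bool, (((A.filter (fun x => x 0 = true)).image Fin.tail).inf' (hT.image Fin.tail)
                (fun x' => 2 * dH c' x' + ℓ (Fin.cons true x')) +
              ((A.filter (fun x => x 0 = false)).image Fin.tail).inf' (hF.image Fin.tail)
                (fun x' => 2 * dH c' x' + ℓ (Fin.cons false x'))) :=
            Finset.sum_le_sum (fun c' _ => add_le_add (hptT c') (hptF c'))
        _ = (∑ c' : Fin n → Bool, ((A.filter (fun x => x 0 = true)).image Fin.tail).inf' (by exact hT.image Fin.tail)
                (fun x' => 2 * dH c' x' + ℓ (Fin.cons true x'))) +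
            (∑ c' : Fin n → Bool, ((A.filter (fun x => x 0 = false)).image Fin.tail).inf' (by exact hF.image Fin.tail)
                (fun x' => 2 * dH c' x' + ℓ (Fin.cons false x'))) := Finset.sum_add_distrib
        _ ≤ 2 ^ n * ((n : ℝ) - (Real.logb 2 (∑ x ∈ A.filter (fun x => x 0 = true), (2:ℝ)^(-ℓ x)) + (n:ℝ) * Real.logb 2 (1-β)) / Real.logb 2 ((1-β)/β))
            + 2 ^ n * ((n : ℝ) - (Real.logb 2 (∑ x ∈ A.filter (fun x => x 0 = false), (2:ℝ)^(-ℓ x)) + (n:ℝ) * Real.logb 2 (1-β)) / Real.logb 2 ((1-β)/β)) :=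
            add_le_add (child true hT) (child false hF)
        _ ≤ _ := by
            have hdiff : 2 ^ (n+1) * (((n+1:ℕ):ℝ) - (Real.logb 2 (∑ x ∈ A, (2:ℝ)^(-ℓ x)) + ((n+1:ℕ):ℝ) * Real.logb 2 (1-β)) / Real.logb 2 ((1-β)/β))
                - (2 ^ n * ((n : ℝ) - (Real.logb 2 (∑ x ∈ A.filter (fun x => x 0 = true), (2:ℝ)^(-ℓ x)) + (n:ℝ) * Real.logb 2 (1-β)) / Real.logb 2 ((1-β)/β))
                  + 2 ^ n * ((n : ℝ) - (Real.logb 2 (∑ x ∈ A.filter (fun x => x 0 = false), (2:ℝ)^(-ℓ x)) + (n:ℝ) * Real.logb 2 (1-β)) / Real.logb 2 ((1-β)/β)))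
                = 2^n * ((Real.logb 2 (∑ x ∈ A.filter (fun x => x 0 = true), (2:ℝ)^(-ℓ x))
                    + Real.logb 2 (∑ x ∈ A.filter (fun x => x 0 = false), (2:ℝ)^(-ℓ x))
                    - 2 * Real.logb 2 (∑ x ∈ A, (2:ℝ)^(-ℓ x))
                    - 2 * Real.logb 2 (1-β) + 2 * Real.logb 2 ((1-β)/β)) / Real.logb 2 ((1-β)/β)) := by
              push_cast
              rw [pow_succ]
              field_simp
              ring
            have hnum : 0 ≤ Real.logb 2 (∑ x ∈ A.filter (fun x => x 0 = true), (2:ℝ)^(-ℓ x))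
                    + Real.logb 2 (∑ x ∈ A.filter (fun x => x 0 = false), (2:ℝ)^(-ℓ x))
                    - 2 * Real.logb 2 (∑ x ∈ A, (2:ℝ)^(-ℓ x))
                    - 2 * Real.logb 2 (1-β) + 2 * Real.logb 2 ((1-β)/β) := by
              rw [hLβ]
              linarith
            have hq : 0 ≤ 2^n * ((Real.logb 2 (∑ x ∈ A.filter (fun x => x 0 = true), (2:ℝ)^(-ℓ x))
                    + Real.logb 2 (∑ x ∈ A.filter (fun x => x 0 = false), (2:ℝ)^(-ℓ x))
                    - 2 * Real.logb 2 (∑ x ∈ A, (2:ℝ)^(-ℓ x))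
                    - 2 * Real.logb 2 (1-β) + 2 * Real.logb 2 ((1-β)/β)) / Real.logb 2 ((1-β)/β)) :=
              mul_nonneg (by positivity) (div_nonneg hnum hL.le)
            linarith
    -- put the cases together
    by_cases hT : (A.filter (fun x => x 0 = true)).Nonempty
    · by_cases hF : (A.filter (fun x => x 0 = false)).Nonempty
      · by_cases hc1 : (1-β) * (∑ x ∈ A, (2:ℝ)^(-ℓ x)) ≤ ∑ x ∈ A.filter (fun x => x 0 = true), (2:ℝ)^(-ℓ x)
        · exact caseA true hT hc1
        · by_cases hc2 : (1-β) * (∑ x ∈ A, (2:ℝ)^(-ℓ x)) ≤ ∑ x ∈ A.filter (fun x => x 0 = false), (2:ℝ)^(-ℓ x)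
          · exact caseA false hF hc2
          · apply caseB hT hF
            · have h2' := not_le.mp hc2
              linarith [hsplitS]
            · have h1' := not_le.mp hc1
              linarith [hsplitS]
      · have hSF0 : ∑ x ∈ A.filter (fun x => x 0 = false), (2:ℝ)^(-ℓ x) = 0 := by
          rw [Finset.not_nonempty_iff_eq_empty.mp hF, Finset.sum_empty]
        apply caseA true hT
        have hSTpos := hSbpos true hT
        nlinarith [hsplitS]
    · have hF : (A.filter (fun x => x 0 = false)).Nonempty := by
        obtain ⟨x, hx⟩ := hA
        rcases Bool.eq_false_or_eq_true (x 0) with h0 | h0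
        · exact absurd ⟨x, Finset.mem_filter.mpr ⟨hx, h0⟩⟩ hT
        · exact ⟨x, Finset.mem_filter.mpr ⟨hx, h0⟩⟩
      have hST0 : ∑ x ∈ A.filter (fun x => x 0 = true), (2:ℝ)^(-ℓ x) = 0 := by
        rw [Finset.not_nonempty_iff_eq_empty.mp hT, Finset.sum_empty]
      apply caseA false hF
      have hSFpos := hSbpos false hF
      nlinarith [hsplitS]

set_option maxHeartbeats 2000000

theorem stmt1 (n : ℕ) (hn : 0 < n) (w : (Fin n → Bool) → ℝ)
    (hw : ∀ x, 0 ≤ w x) (hsupp : ∃ x, 0 < w x)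
    (β : ℝ) (hβ0 : 1 / 3 ≤ β) (hβ1 : β < 1 / 2) :
    wRad w ≥ Real.logb 2 (wmax w) +
      ((n : ℝ) * Real.logb 2 (1 - β) + Real.logb 2 (Zw w) - Real.logb 2 (wmax w)) /
        Real.logb 2 ((1 - β) / β) := by
  classical
  obtain ⟨x₀, hx₀⟩ := hsupp
  have huniv : (Finset.univ : Finset (Fin n → Bool)).Nonempty := ⟨x₀, Finset.mem_univ _⟩
  have hne : (Finset.univ.filter (fun x : Fin n → Bool => 0 < w x)).Nonempty :=
    ⟨x₀, Finset.mem_filter.mpr ⟨Finset.mem_univ _, hx₀⟩⟩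
  have hMdef : wmax w = Finset.univ.sup' huniv w := by
    unfold wmax
    have hset : {y : ℝ | ∃ x, y = w x} = ↑(Finset.univ.image w) := by
      ext y
      simp [eq_comm]
    rw [hset, Finset.Nonempty.csSup_eq_max' (huniv.image w), Finset.max'_eq_sup',
      Finset.sup'_image]
    rfl
  have hMle : ∀ x, w x ≤ wmax w := by
    intro x; rw [hMdef]; exact Finset.le_sup' w (Finset.mem_univ x)
  have hMpos : 0 < wmax w := lt_of_lt_of_le hx₀ (hMle x₀)
  have hZsupp : Zw w = ∑ x ∈ Finset.univ.filter (fun x => 0 < w x), w x := by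
    unfold Zw
    have hzero : ∑ x ∈ Finset.univ.filter (fun x => ¬ 0 < w x), w x = 0 :=
      Finset.sum_eq_zero (fun x hx => le_antisymm (not_lt.mp (Finset.mem_filter.mp hx).2) (hw x))
    rw [← Finset.sum_filter_add_sum_filter_not Finset.univ (fun x => 0 < w x) w, hzero, add_zero]
  have hZpos : 0 < Zw w := by
    rw [hZsupp]
    exact Finset.sum_pos (fun x hx => (Finset.mem_filter.mp hx).2) hne
  have hℓ0 : ∀ x ∈ Finset.univ.filter (fun x : Fin n → Bool => 0 < w x),
      0 ≤ Real.logb 2 (wmax w) - Real.logb 2 (w x) := by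
    intro x hx
    have hwx : 0 < w x := (Finset.mem_filter.mp hx).2
    have := Real.logb_le_logb_of_le (b := 2) (by norm_num) hwx (hMle x)
    linarith
  have h2ℓ : ∀ x ∈ Finset.univ.filter (fun x : Fin n → Bool => 0 < w x),
      (2:ℝ) ^ (-(Real.logb 2 (wmax w) - Real.logb 2 (w x))) = w x / wmax w := by
    intro x hx
    have hwx : 0 < w x := (Finset.mem_filter.mp hx).2
    have hexp : -(Real.logb 2 (wmax w) - Real.logb 2 (w x)) = Real.logb 2 (w x / wmax w) := by
      rw [Real.logb_div (ne_of_gt hwx) (ne_of_gt hMpos)]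
      ring
    rw [hexp, Real.rpow_logb (by norm_num) (by norm_num) (div_pos hwx hMpos)]
  have hSsum : ∑ x ∈ Finset.univ.filter (fun x : Fin n → Bool => 0 < w x),
      (2:ℝ) ^ (-(Real.logb 2 (wmax w) - Real.logb 2 (w x))) = Zw w / wmax w := by
    rw [Finset.sum_congr rfl h2ℓ, ← Finset.sum_div, ← hZsupp]
  have hip : ∀ c x : Fin n → Bool, ip c x = (n:ℝ) - 2 * dH c x := by
    intro c x
    unfold ip dH
    have hterm : ∀ i : Fin n, sgn (c i) * sgn (x i) = 1 - 2 * (if c i = x i then (0:ℝ) else 1) := by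
      intro i
      cases hc : c i <;> cases hx : x i <;> simp [sgn] <;> norm_num
    rw [Finset.sum_congr rfl (fun i _ => hterm i), Finset.sum_sub_distrib, Finset.sum_const,
      ← Finset.mul_sum]
    simp [Finset.card_univ]
  have hdelta : ∀ c, wdelta c w = ((n:ℝ) + Real.logb 2 (wmax w)) -
      (Finset.univ.filter (fun x : Fin n → Bool => 0 < w x)).inf' hne
        (fun x => 2 * dH c x + (Real.logb 2 (wmax w) - Real.logb 2 (w x))) := by
    intro c
    unfold wdelta
    have hset : {y : ℝ | ∃ x, 0 < w x ∧ y = ip c x + Real.logb 2 (w x)} =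
        ↑((Finset.univ.filter (fun x : Fin n → Bool => 0 < w x)).image
          (fun x => ip c x + Real.logb 2 (w x))) := by
      ext y
      simp [eq_comm]
    rw [hset, Finset.Nonempty.csSup_eq_max' (hne.image _), Finset.max'_eq_sup', Finset.sup'_image]
    rw [← sup'_const_sub (Finset.univ.filter (fun x : Fin n → Bool => 0 < w x)) hne
      (fun x => 2 * dH c x + (Real.logb 2 (wmax w) - Real.logb 2 (w x)))
      ((n:ℝ) + Real.logb 2 (wmax w))]
    apply Finset.sup'_congr hne rfl
    intro x hx
    show ip c x + Real.logb 2 (w x) = _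
    rw [hip]
    ring
  have hcore := core β hβ0 hβ1 n (Finset.univ.filter (fun x : Fin n → Bool => 0 < w x)) hne
    (fun x => Real.logb 2 (wmax w) - Real.logb 2 (w x)) hℓ0
  beta_reduce at hcore
  rw [hSsum] at hcore
  have hlogZM : Real.logb 2 (Zw w / wmax w) = Real.logb 2 (Zw w) - Real.logb 2 (wmax w) :=
    Real.logb_div (ne_of_gt hZpos) (ne_of_gt hMpos)
  rw [hlogZM] at hcore
  have hsum : ∑ c : Fin n → Bool, wdelta c w = (2^n : ℝ) * ((n:ℝ) + Real.logb 2 (wmax w)) -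
      ∑ c : Fin n → Bool, (Finset.univ.filter (fun x : Fin n → Bool => 0 < w x)).inf' hne
        (fun x => 2 * dH c x + (Real.logb 2 (wmax w) - Real.logb 2 (w x))) := by
    rw [Finset.sum_congr rfl (fun c _ => hdelta c), Finset.sum_sub_distrib, Finset.sum_const]
    have hcard : (Finset.univ : Finset (Fin n → Bool)).card = 2^n := by simp
    rw [hcard, nsmul_eq_mul]
    push_cast
    ring
  have hpow : (0:ℝ) < 2^n := by positivity
  rw [ge_iff_le]
  unfold wRad
  rw [Fintype.card_fin]
  rw [le_div_iff₀ hpow]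
  rw [hsum]
  have hre : ((n:ℝ) * Real.logb 2 (1 - β) + Real.logb 2 (Zw w) - Real.logb 2 (wmax w)) /
        Real.logb 2 ((1 - β) / β)
      = (Real.logb 2 (Zw w) - Real.logb 2 (wmax w) + (n:ℝ) * Real.logb 2 (1 - β)) /
        Real.logb 2 ((1 - β) / β) := by ring
  rw [hre]
  nlinarith [hcore, hpow]
end

section
/- Let n be a positive integer and w : {-1,1}^n → [0,∞) a weight function with nonempty support. For all real λ > 0 and γ > 0 with λγ ≤ 1, writing w^γ for the weight function x ↦ w(x)^γ (whose support equals that of w), one has R(w^γ) ≤ (1/λ)·log₂ Z(w) + ((λγ − 1)/λ)·log₂ w_min + λn/2. -/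
open Finset

lemma cube_sum (n : ℕ) (lam : ℝ) (x : Fin n → Bool) :
    ∑ c : Fin n → Bool, (2:ℝ) ^ (lam * ip c x) = ((2:ℝ)^lam + 2^(-lam))^n := by
  have h1 : ∀ c : Fin n → Bool, (2:ℝ) ^ (lam * ip c x)
      = ∏ i, (2:ℝ) ^ (lam * (sgn (c i) * sgn (x i))) := by
    intro c
    rw [ip, Finset.mul_sum, Real.rpow_sum_of_pos two_pos]
  simp only [h1]
  rw [← Fintype.prod_sum (fun i (b : Bool) => (2:ℝ) ^ (lam * (sgn b * sgn (x i))))]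
  have h2 : ∀ i, ∑ b : Bool, (2:ℝ) ^ (lam * (sgn b * sgn (x i)))
      = (2:ℝ)^lam + 2^(-lam) := by
    intro i
    rw [Fintype.sum_bool]
    cases x i <;> simp [sgn] <;> ring_nf
  simp only [h2]
  simp [Finset.prod_const]

lemma cosh_bound {lam : ℝ} (hlam : 0 < lam) :
    Real.logb 2 (((2:ℝ)^lam + 2^(-lam)) / 2) ≤ lam^2 / 2 := by
  have hl2 : (0:ℝ) < Real.log 2 := Real.log_pos one_lt_two
  have h1 : ((2:ℝ)^lam + 2^(-lam)) / 2 = Real.cosh (lam * Real.log 2) := by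
    rw [Real.cosh_eq]
    rw [Real.rpow_def_of_pos two_pos, Real.rpow_def_of_pos two_pos]
    ring_nf
  rw [h1]
  have h2 : Real.cosh (lam * Real.log 2) ≤ Real.exp ((lam * Real.log 2)^2 / 2) :=
    Real.cosh_le_exp_half_sq _
  have h3 : Real.logb 2 (Real.cosh (lam * Real.log 2)) ≤ (lam * Real.log 2)^2 / 2 / Real.log 2 := by
    rw [Real.logb, div_le_div_iff_of_pos_right hl2]
    calc Real.log (Real.cosh (lam * Real.log 2)) ≤ Real.log (Real.exp ((lam * Real.log 2)^2 / 2)) :=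
          Real.log_le_log (Real.cosh_pos _) h2
      _ = (lam * Real.log 2)^2 / 2 := Real.log_exp _
  refine h3.trans ?_
  have hlog2_le : Real.log 2 ≤ 1 := by
    have := Real.log_le_sub_one_of_pos (by norm_num : (0:ℝ) < 2)
    linarith
  have : (lam * Real.log 2)^2 / 2 / Real.log 2 = lam^2 * Real.log 2 / 2 := by
    field_simp
  rw [this]
  nlinarith [sq_nonneg lam]

set_option maxHeartbeats 1000000 in
theorem stmt2 (n : ℕ) (hn : 0 < n) (w : (Fin n → Bool) → ℝ)
    (hw : ∀ x, 0 ≤ w x) (hsupp : ∃ x, 0 < w x)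
    (lam gam : ℝ) (hlam : 0 < lam) (hgam : 0 < gam) (hlg : lam * gam ≤ 1) :
    wRad (fun x => w x ^ gam) ≤
      (1 / lam) * Real.logb 2 (Zw w) + ((lam * gam - 1) / lam) * Real.logb 2 (wmin w)
        + lam * n / 2 := by
  classical
  obtain ⟨x₀, hx₀⟩ := hsupp
  have hl2 : (0:ℝ) < Real.log 2 := Real.log_pos one_lt_two
  -- wmin facts
  have hMfin : {y : ℝ | ∃ x, 0 < w x ∧ y = w x}.Finite :=
    (Set.finite_range w).subset (by rintro y ⟨x, _, rfl⟩; exact ⟨x, rfl⟩)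
  have hMne : {y : ℝ | ∃ x, 0 < w x ∧ y = w x}.Nonempty := ⟨w x₀, x₀, hx₀, rfl⟩
  have hmpos : 0 < wmin w := by
    obtain ⟨xm, hxm, heq⟩ := hMne.csInf_mem hMfin
    rw [wmin, heq]; exact hxm
  have hmle : ∀ x, 0 < w x → wmin w ≤ w x := fun x hx =>
    csInf_le hMfin.bddBelow ⟨x, hx, rfl⟩
  -- define S
  set S : (Fin n → Bool) → ℝ := fun c => ∑ x, w x * (2:ℝ) ^ (lam * ip c x) with hS
  have hSpos : ∀ c, 0 < S c := by
    intro c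
    apply Finset.sum_pos' (fun x _ => mul_nonneg (hw x) (Real.rpow_pos_of_pos two_pos _).le)
    exact ⟨x₀, Finset.mem_univ _, mul_pos hx₀ (Real.rpow_pos_of_pos two_pos _)⟩
  set Lm := Real.logb 2 (wmin w) with hLm
  -- per-c bound on wdelta
  have hdelta : ∀ c, wdelta c (fun x => w x ^ gam)
      ≤ (1/lam) * Real.logb 2 (S c) + ((lam * gam - 1)/lam) * Lm := by
    intro c
    apply csSup_le
    · exact ⟨ip c x₀ + Real.logb 2 (w x₀ ^ gam), x₀, Real.rpow_pos_of_pos hx₀ gam, rfl⟩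
    rintro y ⟨x, hxpos, rfl⟩
    replace hxpos : 0 < w x ^ gam := hxpos
    have hwx : 0 < w x := by
      rcases (hw x).lt_or_eq with h | h
      · exact h
      · rw [← h, Real.zero_rpow hgam.ne'] at hxpos; exact absurd hxpos (lt_irrefl 0)
    show ip c x + Real.logb 2 (w x ^ gam) ≤ (1/lam) * Real.logb 2 (S c) + ((lam * gam - 1)/lam) * Lm
    have hlogpow : Real.logb 2 (w x ^ gam) = gam * Real.logb 2 (w x) :=
      Real.logb_rpow_eq_mul_logb_of_pos hwx
    have hterm : w x * (2:ℝ) ^ (lam * ip c x) ≤ S c := by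
      simp only [hS]
      exact Finset.single_le_sum (f := fun z => w z * (2:ℝ) ^ (lam * ip c z))
        (fun z _ => mul_nonneg (hw z) (Real.rpow_pos_of_pos two_pos _).le) (Finset.mem_univ x)
    have hstep : lam * ip c x + Real.logb 2 (w x) ≤ Real.logb 2 (S c) := by
      have h1 : Real.logb 2 (w x * (2:ℝ) ^ (lam * ip c x))
          = Real.logb 2 (w x) + lam * ip c x := by
        rw [Real.logb_mul hwx.ne' (Real.rpow_pos_of_pos two_pos _).ne',
          Real.logb_rpow (by norm_num) (by norm_num)]
      have h2 := Real.logb_le_logb_of_le one_lt_two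
        (mul_pos hwx (Real.rpow_pos_of_pos two_pos _)) hterm
      rw [h1] at h2; linarith
    have hmono : Lm ≤ Real.logb 2 (w x) :=
      Real.logb_le_logb_of_le one_lt_two hmpos (hmle x hwx)
    have hkey : lam * (ip c x + gam * Real.logb 2 (w x))
        ≤ Real.logb 2 (S c) + (lam * gam - 1) * Lm := by nlinarith
    rw [hlogpow]
    calc ip c x + gam * Real.logb 2 (w x)
        = lam * (ip c x + gam * Real.logb 2 (w x)) / lam := by field_simp
      _ ≤ (Real.logb 2 (S c) + (lam * gam - 1) * Lm) / lam := by
          exact div_le_div_of_nonneg_right hkey hlam.le |>.trans_eq rfl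
      _ = (1/lam) * Real.logb 2 (S c) + ((lam * gam - 1)/lam) * Lm := by ring
  -- cardinality
  have hcard : Fintype.card (Fin n → Bool) = 2 ^ n := by simp
  set N : ℝ := (2:ℝ) ^ n with hN
  have hNpos : (0:ℝ) < N := by positivity
  have hcardR : ((Fintype.card (Fin n → Bool) : ℕ) : ℝ) = N := by rw [hcard]; push_cast; rfl
  -- Jensen via AM-GM
  have hjen : ∑ c, Real.logb 2 (S c) ≤ N * Real.logb 2 ((∑ c, S c) / N) := by
    have hgm := Real.geom_mean_le_arith_mean_weighted Finset.univ (fun _ => 1/N) S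
      (fun _ _ => by positivity)
      (by rw [Finset.sum_const, Finset.card_univ, hcard, nsmul_eq_mul]; push_cast; field_simp; rw [hN])
      (fun c _ => (hSpos c).le)
    have hprodpos : 0 < ∏ c, S c ^ (1/N) :=
      Finset.prod_pos (fun c _ => Real.rpow_pos_of_pos (hSpos c) _)
    have hlogle := Real.log_le_log hprodpos hgm
    have hlhs : Real.log (∏ c, S c ^ (1/N)) = (1/N) * ∑ c, Real.log (S c) := by
      rw [Real.log_prod (fun c _ => (Real.rpow_pos_of_pos (hSpos c) _).ne'),
        Finset.mul_sum]
      exact Finset.sum_congr rfl (fun c _ => by rw [Real.log_rpow (hSpos c)])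
    have hrhs : ∑ c, (1/N) * S c = (∑ c, S c) / N := by
      have h' : ∑ c, (1/N) * S c = ∑ c, S c / N :=
        Finset.sum_congr rfl (fun c _ => by ring)
      rw [h', ← Finset.sum_div]
    rw [hlhs, hrhs] at hlogle
    have hmul : ∑ c, Real.log (S c) ≤ N * Real.log ((∑ c, S c) / N) := by
      calc ∑ c, Real.log (S c) = N * ((1/N) * ∑ c, Real.log (S c)) := by field_simp
        _ ≤ N * Real.log ((∑ c, S c) / N) := mul_le_mul_of_nonneg_left hlogle hNpos.le
    calc ∑ c, Real.logb 2 (S c) = (∑ c, Real.log (S c)) / Real.log 2 := by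
          simp only [Real.logb]; rw [Finset.sum_div]
      _ ≤ (N * Real.log ((∑ c, S c) / N)) / Real.log 2 :=
          (div_le_div_iff_of_pos_right hl2).mpr hmul
      _ = N * Real.logb 2 ((∑ c, S c) / N) := by rw [Real.logb]; ring
  -- compute the average of S
  have hsumS : ∑ c, S c = Zw w * ((2:ℝ)^lam + 2^(-lam))^n := by
    simp only [hS]
    rw [Finset.sum_comm]
    rw [Zw, Finset.sum_mul]
    refine Finset.sum_congr rfl (fun x _ => ?_)
    rw [← Finset.mul_sum, cube_sum n lam x]
  have hZpos : 0 < Zw w := by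
    refine Finset.sum_pos' (fun z _ => hw z) ⟨x₀, Finset.mem_univ _, hx₀⟩
  set q : ℝ := ((2:ℝ)^lam + 2^(-lam)) / 2 with hq
  have hqpos : 0 < q := by
    have := Real.rpow_pos_of_pos (show (0:ℝ) < 2 by norm_num) lam
    have := Real.rpow_pos_of_pos (show (0:ℝ) < 2 by norm_num) (-lam)
    rw [hq]; positivity
  have havg : (∑ c, S c) / N = Zw w * q ^ n := by
    rw [hsumS, hN, hq, div_pow]
    field_simp
  have hlogavg : Real.logb 2 ((∑ c, S c) / N) ≤ Real.logb 2 (Zw w) + n * (lam^2/2) := by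
    rw [havg, Real.logb_mul hZpos.ne' (pow_pos hqpos n).ne', Real.logb_pow]
    have := cosh_bound hlam
    rw [← hq] at this
    have hnn : (0:ℝ) ≤ (n:ℝ) := Nat.cast_nonneg n
    nlinarith
  -- sum the per-c bounds
  have hsum1 : ∑ c, wdelta c (fun x => w x ^ gam)
      ≤ (1/lam) * ∑ c, Real.logb 2 (S c) + N * (((lam * gam - 1)/lam) * Lm) := by
    calc ∑ c, wdelta c (fun x => w x ^ gam)
        ≤ ∑ c : Fin n → Bool, ((1/lam) * Real.logb 2 (S c) + ((lam * gam - 1)/lam) * Lm) :=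
          Finset.sum_le_sum (fun c _ => hdelta c)
      _ = (1/lam) * ∑ c, Real.logb 2 (S c) + N * (((lam * gam - 1)/lam) * Lm) := by
          rw [Finset.sum_add_distrib, Finset.sum_const, ← Finset.mul_sum, Finset.card_univ,
            nsmul_eq_mul, hcardR]
  have hlaminv : (0:ℝ) ≤ 1/lam := by positivity
  have hsum2 : (1/lam) * ∑ c, Real.logb 2 (S c)
      ≤ (1/lam) * (N * (Real.logb 2 (Zw w) + n * (lam^2/2))) := by
    apply mul_le_mul_of_nonneg_left _ hlaminv
    calc ∑ c, Real.logb 2 (S c) ≤ N * Real.logb 2 ((∑ c, S c) / N) := hjen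
      _ ≤ N * (Real.logb 2 (Zw w) + n * (lam^2/2)) :=
          mul_le_mul_of_nonneg_left hlogavg hNpos.le
  -- final assembly
  have hfinal : ∑ c, wdelta c (fun x => w x ^ gam)
      ≤ N * ((1/lam) * Real.logb 2 (Zw w) + ((lam * gam - 1)/lam) * Lm + lam * n / 2) := by
    have hid : (1/lam) * (N * (Real.logb 2 (Zw w) + n * (lam^2/2)))
        = N * ((1/lam) * Real.logb 2 (Zw w)) + N * (lam * n / 2) := by
      field_simp
    nlinarith [hsum1, hsum2]
  rw [wRad]
  have hcardn : Fintype.card (Fin n) = n := Fintype.card_fin n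
  rw [hcardn]
  rw [div_le_iff₀ hNpos]
  calc ∑ c, wdelta c (fun x => w x ^ gam)
      ≤ N * ((1/lam) * Real.logb 2 (Zw w) + ((lam * gam - 1)/lam) * Lm + lam * n / 2) := hfinal
    _ = ((1/lam) * Real.logb 2 (Zw w) + ((lam * gam - 1)/lam) * Lm + lam * n / 2) * N := by ring
end

section
/- Let n be a positive integer and w : {-1,1}^n → [0,∞) a weight function with nonempty support. Then log₂ Z(w) ≥ R(w) − n/2. -/
open Finset

set_option maxHeartbeats 800000 in
theorem stmt7 (n : ℕ) (hn : 0 < n) (w : (Fin n → Bool) → ℝ)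
    (hw : ∀ x, 0 ≤ w x) (hsupp : ∃ x, 0 < w x) :
    Real.logb 2 (Zw w) ≥ wRad w - n / 2 := by
  obtain ⟨x₀, hx₀⟩ := hsupp
  have hlog2 : (0:ℝ) < Real.log 2 := Real.log_pos one_lt_two
  set F : (Fin n → Bool) → ℝ := fun c => ∑ x, w x * Real.exp (ip c x * Real.log 2) with hF
  have hFpos : ∀ c, 0 < F c := by
    intro c
    apply Finset.sum_pos' (fun x _ => mul_nonneg (hw x) (Real.exp_pos _).le)
    exact ⟨x₀, Finset.mem_univ _, mul_pos hx₀ (Real.exp_pos _)⟩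
  -- step 1: wdelta bound
  have hdelta : ∀ c, wdelta c w ≤ Real.logb 2 (F c) := by
    intro c
    simp only [wdelta]
    refine csSup_le ?_ ?_
    · exact ⟨ip c x₀ + Real.logb 2 (w x₀), x₀, hx₀, rfl⟩
    rintro y ⟨x, hx, rfl⟩
    have h0 : Real.logb 2 (Real.exp (ip c x * Real.log 2)) = ip c x := by
      rw [Real.logb, Real.log_exp]
      field_simp
    have h1 : ip c x + Real.logb 2 (w x) = Real.logb 2 (w x * Real.exp (ip c x * Real.log 2)) := by
      rw [Real.logb_mul (ne_of_gt hx) (Real.exp_pos _).ne', h0]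
      ring
    rw [h1]
    apply Real.logb_le_logb_of_le one_lt_two (mul_pos hx (Real.exp_pos _))
    exact Finset.single_le_sum (f := fun x => w x * Real.exp (ip c x * Real.log 2))
      (fun x _ => mul_nonneg (hw x) (Real.exp_pos _).le) (Finset.mem_univ x)
  have hcard : Fintype.card (Fin n → Bool) = 2 ^ n := by simp
  -- step 2: Jensen
  have jensen : (∑ c, Real.logb 2 (F c)) / 2 ^ n ≤ Real.logb 2 ((∑ c, F c) / 2 ^ n) := by
    have h := (strictConcaveOn_log_Ioi.concaveOn).le_map_sum
      (t := (Finset.univ : Finset (Fin n → Bool))) (w := fun _ => (1:ℝ)/2^n) (p := F)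
      (fun i _ => by positivity)
      (by rw [Finset.sum_const, Finset.card_univ, hcard, nsmul_eq_mul]; push_cast; field_simp)
      (fun i _ => Set.mem_Ioi.mpr (hFpos i))
    simp only [smul_eq_mul] at h
    rw [← Finset.mul_sum, ← Finset.mul_sum] at h
    simp only [Real.logb]
    rw [← Finset.sum_div, div_right_comm]
    have h3 : (∑ c : Fin n → Bool, Real.log (F c)) / 2 ^ n ≤ Real.log ((∑ c, F c) / 2 ^ n) := by
      have e1 : (1:ℝ)/2^n * ∑ c : Fin n → Bool, Real.log (F c)
          = (∑ c : Fin n → Bool, Real.log (F c)) / 2 ^ n := by ring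
      have e2 : (1:ℝ)/2^n * ∑ c : Fin n → Bool, F c = (∑ c : Fin n → Bool, F c) / 2 ^ n := by ring
      rw [e1, e2] at h; exact h
    gcongr
  -- step 3: compute the average
  have hsumF : ∑ c, F c = Zw w * (5/2) ^ n := by
    rw [hF, Finset.sum_comm, Zw, Finset.sum_mul]
    apply Finset.sum_congr rfl
    intro x _
    have hx5 : ∑ c : Fin n → Bool, Real.exp (ip c x * Real.log 2) = (5/2) ^ n := by
      have e : ∀ c : Fin n → Bool, Real.exp (ip c x * Real.log 2)
          = ∏ i, Real.exp (sgn (c i) * sgn (x i) * Real.log 2) := by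
        intro c
        rw [ip, Finset.sum_mul, Real.exp_sum]
      simp only [e]
      rw [← Fintype.prod_sum (fun (i : Fin n) (b : Bool) => Real.exp (sgn b * sgn (x i) * Real.log 2))]
      have : ∀ i : Fin n, ∑ b : Bool, Real.exp (sgn b * sgn (x i) * Real.log 2) = 5/2 := by
        intro i
        rw [Fintype.sum_bool]
        cases x i <;>
          simp [sgn, Real.exp_log, Real.exp_neg, Real.exp_log two_pos] <;> norm_num
      rw [Finset.prod_congr rfl fun i _ => this i, Finset.prod_const, Finset.card_univ,
        Fintype.card_fin]
    rw [← Finset.mul_sum, hx5]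
  -- step 4: conclude
  have hZpos : 0 < Zw w := by
    apply Finset.sum_pos' (fun x _ => hw x)
    exact ⟨x₀, Finset.mem_univ _, hx₀⟩
  have hfinal : Real.logb 2 ((∑ c, F c) / 2 ^ n)
      = Real.logb 2 (Zw w) + n * Real.logb 2 (5/4) := by
    rw [hsumF]
    have : Zw w * (5/2) ^ n / 2 ^ n = Zw w * (5/4) ^ n := by
      rw [mul_div_assoc, ← div_pow]; norm_num
    rw [this, Real.logb_mul (ne_of_gt hZpos) (by positivity), Real.logb_pow]
  have hlogb54 : Real.logb 2 (5/4) ≤ 1/2 := by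
    rw [Real.logb_le_iff_le_rpow one_lt_two (by norm_num)]
    rw [show ((1:ℝ)/2) = (2:ℝ)⁻¹ by norm_num, show ((2:ℝ)⁻¹) = ((1:ℝ)/2) by norm_num,
      ← Real.sqrt_eq_rpow]
    rw [show ((5:ℝ)/4) = Real.sqrt ((5/4)^2) by rw [Real.sqrt_sq]; norm_num]
    apply Real.sqrt_le_sqrt; norm_num
  have hRad : wRad w ≤ Real.logb 2 (Zw w) + n * Real.logb 2 (5/4) := by
    rw [wRad, Fintype.card_fin, ← hfinal]
    calc (∑ c : Fin n → Bool, wdelta c w) / 2 ^ n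
        ≤ (∑ c, Real.logb 2 (F c)) / 2 ^ n := by
          apply div_le_div_of_nonneg_right ?_ (by positivity)
          exact Finset.sum_le_sum fun c _ => hdelta c
      _ ≤ _ := jensen
  have : (n:ℝ) * Real.logb 2 (5/4) ≤ n/2 := by
    calc (n:ℝ) * Real.logb 2 (5/4) ≤ n * (1/2) :=
          mul_le_mul_of_nonneg_left hlogb54 (Nat.cast_nonneg n)
      _ = n/2 := by ring
  linarith
end

section
/- Let n be a positive integer and w : {-1,1}^n → [0,∞) a weight function with nonempty support. If 0 < R(w) − log₂ w_min ≤ n, then log₂ Z(w) ≥ (R(w) − log₂ w_min)²/(2n) + log₂ w_min. -/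
open Finset

lemma finite_aux {α : Type*} [Finite α] (P : α → Prop) (f : α → ℝ) :
    {y : ℝ | ∃ x, P x ∧ y = f x}.Finite := by
  have h : {y : ℝ | ∃ x, P x ∧ y = f x} = f '' {x | P x} := by
    ext y
    constructor
    · rintro ⟨x, hx, rfl⟩; exact ⟨x, hx, rfl⟩
    · rintro ⟨x, hx, rfl⟩; exact ⟨x, hx, rfl⟩
  rw [h]
  exact (Set.toFinite _).image f
theorem stmt9 (n : ℕ) (hn : 0 < n) (w : (Fin n → Bool) → ℝ)
    (hw : ∀ x, 0 ≤ w x) (hsupp : ∃ x, 0 < w x)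
    (h1 : 0 < wRad w - Real.logb 2 (wmin w))
    (h2 : wRad w - Real.logb 2 (wmin w) ≤ n) :
    Real.logb 2 (Zw w) ≥
      (wRad w - Real.logb 2 (wmin w)) ^ 2 / (2 * n) + Real.logb 2 (wmin w) := by
  obtain ⟨x₀, hx₀⟩ := hsupp
  set L := Real.log 2 with hL
  have hLpos : 0 < L := Real.log_pos one_lt_two
  have hLle : L ≤ 1 := by
    rw [hL]
    calc Real.log 2 ≤ 0.6931471808 := Real.log_two_lt_d9.le
    _ ≤ 1 := by norm_num
  -- wmin facts
  obtain ⟨xm, hxmpos, hxm⟩ :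
      ∃ x, 0 < w x ∧ wmin w = w x :=
    Set.Nonempty.csInf_mem
      (s := {y : ℝ | ∃ x, 0 < w x ∧ y = w x}) ⟨w x₀, x₀, hx₀, rfl⟩ (finite_aux _ _)
  have hminpos : 0 < wmin w := hxm ▸ hxmpos
  have hminle : ∀ x, 0 < w x → wmin w ≤ w x := fun x hx =>
    csInf_le (Set.Finite.bddBelow (finite_aux _ _)) ⟨x, hx, rfl⟩
  have hZpos : 0 < Zw w :=
    Finset.sum_pos' (fun x _ => hw x) ⟨x₀, Finset.mem_univ _, hx₀⟩
  set m := Real.logb 2 (wmin w) with hm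
  set R' := wRad w - m with hR'
  have hnpos : (0:ℝ) < n := Nat.cast_pos.mpr hn
  set lam := R' / n with hlam
  have hlampos : 0 < lam := div_pos h1 hnpos
  have hlamle : lam ≤ 1 := (div_le_one hnpos).mpr h2
  set t := L * lam with ht
  -- Step 1: pointwise bound
  have step1 : ∀ c : Fin n → Bool, Real.exp (t * (wdelta c w - m)) ≤
      ∑ x, (w x / wmin w) * Real.exp (t * ip c x) := by
    intro c
    obtain ⟨x₁, hx₁pos, hx₁⟩ :
        ∃ x, 0 < w x ∧ wdelta c w = ip c x + Real.logb 2 (w x) :=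
      Set.Nonempty.csSup_mem
        (s := {y : ℝ | ∃ x, 0 < w x ∧ y = ip c x + Real.logb 2 (w x)})
        ⟨ip c x₀ + Real.logb 2 (w x₀), x₀, hx₀, rfl⟩ (finite_aux _ _)
    have hu : 1 ≤ w x₁ / wmin w := (one_le_div hminpos).mpr (hminle _ hx₁pos)
    have key : t * (wdelta c w - m) = t * ip c x₁ + lam * Real.log (w x₁ / wmin w) := by
      rw [hx₁, hm, Real.logb, Real.logb,
        Real.log_div (ne_of_gt hx₁pos) (ne_of_gt hminpos), ht]
      field_simp
      ring
    have hbound : Real.exp (lam * Real.log (w x₁ / wmin w)) ≤ w x₁ / wmin w := by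
      have hlog : 0 ≤ Real.log (w x₁ / wmin w) := Real.log_nonneg hu
      calc Real.exp (lam * Real.log (w x₁ / wmin w))
          ≤ Real.exp (Real.log (w x₁ / wmin w)) := by
            apply Real.exp_le_exp.mpr
            nlinarith
        _ = w x₁ / wmin w := Real.exp_log (by linarith)
    calc Real.exp (t * (wdelta c w - m))
        = Real.exp (t * ip c x₁) * Real.exp (lam * Real.log (w x₁ / wmin w)) := by
          rw [key, Real.exp_add]
      _ ≤ Real.exp (t * ip c x₁) * (w x₁ / wmin w) := by
          exact mul_le_mul_of_nonneg_left hbound (Real.exp_pos _).le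
      _ = (w x₁ / wmin w) * Real.exp (t * ip c x₁) := mul_comm _ _
      _ ≤ ∑ x, (w x / wmin w) * Real.exp (t * ip c x) := by
          apply Finset.single_le_sum (f := fun x => (w x / wmin w) * Real.exp (t * ip c x))
            (fun x _ => mul_nonneg (div_nonneg (hw x) hminpos.le) (Real.exp_pos _).le)
            (Finset.mem_univ x₁)
  -- Step 2: sum over c
  have step2 : ∑ c : Fin n → Bool, ∑ x, (w x / wmin w) * Real.exp (t * ip c x)
      = (Zw w / wmin w) * (Real.exp t + Real.exp (-t)) ^ n := by
    rw [Finset.sum_comm]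
    have hinner : ∀ x : Fin n → Bool,
        ∑ c : Fin n → Bool, Real.exp (t * ip c x) = (Real.exp t + Real.exp (-t)) ^ n := by
      intro x
      have hprod : ∀ c : Fin n → Bool,
          Real.exp (t * ip c x) = ∏ i, Real.exp (t * (sgn (c i) * sgn (x i))) := by
        intro c
        rw [← Real.exp_sum, ip, Finset.mul_sum]
      simp_rw [hprod]
      have hswap := Finset.prod_univ_sum (fun _ : Fin n => (Finset.univ : Finset Bool))
        (fun i b => Real.exp (t * (sgn b * sgn (x i))))
      rw [Fintype.piFinset_univ] at hswap
      rw [← hswap]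
      have hfac : ∀ i : Fin n, ∑ b : Bool, Real.exp (t * (sgn b * sgn (x i)))
          = Real.exp t + Real.exp (-t) := by
        intro i
        rw [Fintype.sum_bool]
        cases hxi : x i <;> simp [sgn] <;> ring_nf
      rw [Finset.prod_congr rfl (fun i _ => hfac i), Finset.prod_const,
        Finset.card_univ, Fintype.card_fin]
    simp_rw [← Finset.mul_sum, hinner]
    rw [← Finset.sum_mul, Zw, ← Finset.sum_div]
  -- Step 3: Jensen (AM-GM)
  have card2 : (Fintype.card (Fin n → Bool) : ℝ) = 2 ^ n := by
    simp [Fintype.card_fun]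
  have jensen : Real.exp (t * R') ≤
      (∑ c : Fin n → Bool, Real.exp (t * (wdelta c w - m))) / 2 ^ n := by
    have hw' : ∑ _c : Fin n → Bool, ((2:ℝ) ^ n)⁻¹ = 1 := by
      rw [Finset.sum_const, Finset.card_univ, nsmul_eq_mul]
      rw [show ((Fintype.card (Fin n → Bool) : ℝ)) = 2 ^ n from card2]
      field_simp
    have hgm := Real.geom_mean_le_arith_mean_weighted Finset.univ
      (fun _ => ((2:ℝ) ^ n)⁻¹) (fun c => Real.exp (t * (wdelta c w - m)))
      (fun i _ => by positivity) hw' (fun i _ => (Real.exp_pos _).le)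
    have hlhs : ∏ c : Fin n → Bool, Real.exp (t * (wdelta c w - m)) ^ ((2:ℝ) ^ n)⁻¹
        = Real.exp (t * R') := by
      have : ∀ c : Fin n → Bool, Real.exp (t * (wdelta c w - m)) ^ ((2:ℝ) ^ n)⁻¹
          = Real.exp ((t * (wdelta c w - m)) * ((2:ℝ) ^ n)⁻¹) := by
        intro c
        rw [← Real.exp_mul]
      simp_rw [this, ← Real.exp_sum]
      congr 1
      rw [← Finset.sum_mul, ← Finset.mul_sum, Finset.sum_sub_distrib,
        Finset.sum_const, Finset.card_univ, nsmul_eq_mul,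
        show ((Fintype.card (Fin n → Bool) : ℝ)) = 2 ^ n from card2]
      rw [hR', wRad, Fintype.card_fin]
      field_simp
      try ring
    rw [hlhs] at hgm
    calc Real.exp (t * R') ≤ ∑ c : Fin n → Bool,
          ((2:ℝ) ^ n)⁻¹ * Real.exp (t * (wdelta c w - m)) := hgm
      _ = (∑ c : Fin n → Bool, Real.exp (t * (wdelta c w - m))) / 2 ^ n := by
          rw [← Finset.mul_sum]
          field_simp
  -- Step 4: combine and cosh bound
  have main : Real.exp (t * R') ≤ (Zw w / wmin w) * Real.exp (n * (L * lam ^ 2) / 2) := by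
    calc Real.exp (t * R')
        ≤ (∑ c : Fin n → Bool, Real.exp (t * (wdelta c w - m))) / 2 ^ n := jensen
      _ ≤ (∑ c : Fin n → Bool, ∑ x, (w x / wmin w) * Real.exp (t * ip c x)) / 2 ^ n := by
          apply div_le_div_of_nonneg_right ?_ (by positivity)
          exact Finset.sum_le_sum (fun c _ => step1 c)
      _ = (Zw w / wmin w) * ((Real.exp t + Real.exp (-t)) / 2) ^ n := by
          rw [step2, div_pow, mul_div_assoc]
      _ ≤ (Zw w / wmin w) * Real.exp (n * (L * lam ^ 2) / 2) := by
          apply mul_le_mul_of_nonneg_left ?_ (by positivity)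
          have hcosh : (Real.exp t + Real.exp (-t)) / 2 ≤ Real.exp (L * lam ^ 2 / 2) := by
            have h1' := Real.cosh_le_exp_half_sq t
            rw [Real.cosh_eq] at h1'
            calc (Real.exp t + Real.exp (-t)) / 2 ≤ Real.exp (t ^ 2 / 2) := h1'
              _ ≤ Real.exp (L * lam ^ 2 / 2) := by
                  apply Real.exp_le_exp.mpr
                  rw [ht]
                  nlinarith [sq_nonneg lam]
          calc ((Real.exp t + Real.exp (-t)) / 2) ^ n
              ≤ Real.exp (L * lam ^ 2 / 2) ^ n := by
                apply pow_le_pow_left₀ (by positivity) hcosh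
            _ = Real.exp (n * (L * lam ^ 2) / 2) := by
                rw [← Real.exp_nat_mul]
                congr 1
                ring
  have hlog : t * R' ≤ Real.log (Zw w) - Real.log (wmin w) + n * (L * lam ^ 2) / 2 := by
    have hpos : (0:ℝ) < (Zw w / wmin w) * Real.exp (n * (L * lam ^ 2) / 2) := by positivity
    have := Real.log_le_log (Real.exp_pos _) main
    rwa [Real.log_exp, Real.log_mul (by positivity) (Real.exp_pos _).ne',
      Real.log_exp, Real.log_div hZpos.ne' hminpos.ne'] at this
  -- Final algebra
  have hfinal : R' ^ 2 / (2 * n) ≤ (Real.log (Zw w) - Real.log (wmin w)) / L := by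
    rw [le_div_iff₀ hLpos]
    have ht' : t * R' = L * R' ^ 2 / n := by rw [ht, hlam]; ring
    have hl2 : n * (L * lam ^ 2) / 2 = L * R' ^ 2 / (2 * n) := by
      rw [hlam]; field_simp
    rw [ht', hl2] at hlog
    have : L * R' ^ 2 / n - L * R' ^ 2 / (2 * n) = R' ^ 2 / (2 * n) * L := by
      field_simp; ring
    linarith [hlog, this.symm.le]
  rw [sub_div] at hfinal
  rw [ge_iff_le, hm, ← Real.log_div_log, ← Real.log_div_log, ← hL]
  linarith
end

section
/- Let j ≥ 1 be an integer and w : {-1,1}^j → [0,∞) a weight function with nonempty support. Define w⁺ : {-1,1}^{j−1} → [0,∞) by w⁺(x) = w(x,1) and w⁻ : {-1,1}^{j−1} → [0,∞) by w⁻(x) = w(x,−1). If w⁺ has nonempty support then R(w⁺) ≤ R(w), and if w⁻ has nonempty support then R(w⁻) ≤ R(w). -/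
open Finset

lemma wdelta_finite {ι : Type*} [Fintype ι] [DecidableEq ι] (c : ι → Bool)
    (w : (ι → Bool) → ℝ) :
    Set.Finite {y : ℝ | ∃ x, 0 < w x ∧ y = ip c x + Real.logb 2 (w x)} := by
  have : {y : ℝ | ∃ x, 0 < w x ∧ y = ip c x + Real.logb 2 (w x)} ⊆
      Set.range (fun x => ip c x + Real.logb 2 (w x)) := by
    rintro y ⟨x, _, rfl⟩; exact ⟨x, rfl⟩
  exact (Set.finite_range _).subset this

lemma le_wdelta {ι : Type*} [Fintype ι] [DecidableEq ι] (c : ι → Bool)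
    (w : (ι → Bool) → ℝ) (x : ι → Bool) (hx : 0 < w x) :
    ip c x + Real.logb 2 (w x) ≤ wdelta c w :=
  le_csSup (wdelta_finite c w).bddAbove ⟨x, hx, rfl⟩

lemma ip_snoc (m : ℕ) (c x : Fin m → Bool) (b' b : Bool) :
    ip (Fin.snoc c b' : Fin (m+1) → Bool) (Fin.snoc x b) = ip c x + sgn b' * sgn b := by
  simp [ip, Fin.sum_univ_castSucc]

lemma key_s10 (m : ℕ) (w : (Fin (m + 1) → Bool) → ℝ) (b : Bool)
    (hb : ∃ x : Fin m → Bool, 0 < w (Fin.snoc x b)) :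
    wRad (fun x : Fin m → Bool => w (Fin.snoc x b)) ≤ wRad w := by
  set wb : (Fin m → Bool) → ℝ := fun x => w (Fin.snoc x b) with hwb
  have step : ∀ (c : Fin m → Bool) (b' : Bool),
      wdelta c wb + sgn b' * sgn b ≤ wdelta (Fin.snoc c b' : Fin (m+1) → Bool) w := by
    intro c b'
    have h1 : wdelta c wb ≤ wdelta (Fin.snoc c b' : Fin (m+1) → Bool) w - sgn b' * sgn b := by
      apply csSup_le
      · obtain ⟨x, hx⟩ := hb
        exact ⟨_, ⟨x, hx, rfl⟩⟩
      · rintro y ⟨x, hx, rfl⟩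
        have := le_wdelta (Fin.snoc c b' : Fin (m+1) → Bool) w (Fin.snoc x b) hx
        rw [ip_snoc] at this
        linarith
    linarith
  have pair : ∀ c : Fin m → Bool,
      2 * wdelta c wb ≤ wdelta (Fin.snoc c true : Fin (m+1) → Bool) w +
        wdelta (Fin.snoc c false : Fin (m+1) → Bool) w := by
    intro c
    have h1 := step c true
    have h2 := step c false
    simp [sgn] at h1 h2
    cases b <;> simp [sgn] at h1 h2 ⊢ <;> linarith
  have hre : ∑ c' : Fin (m+1) → Bool, wdelta c' w
      = ∑ b' : Bool, ∑ c : Fin m → Bool, wdelta (Fin.snoc c b' : Fin (m+1) → Bool) w := by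
    have h1 : ∑ p : Bool × (Fin m → Bool), wdelta (Fin.snoc p.2 p.1 : Fin (m+1) → Bool) w
        = ∑ c' : Fin (m+1) → Bool, wdelta c' w :=
      Fintype.sum_equiv (Fin.snocEquiv (fun _ => Bool))
        (fun p => wdelta (Fin.snoc p.2 p.1 : Fin (m+1) → Bool) w)
        (fun c' => wdelta c' w) (fun p => rfl)
    rw [← h1, Fintype.sum_prod_type]
  have hsum : ∑ c : Fin m → Bool, 2 * wdelta c wb ≤ ∑ c' : Fin (m+1) → Bool, wdelta c' w := by
    rw [hre, Fintype.sum_bool, ← Finset.sum_add_distrib]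
    exact Finset.sum_le_sum (fun c _ => pair c)
  have hcard1 : Fintype.card (Fin (m+1)) = m + 1 := Fintype.card_fin _
  have hcard2 : Fintype.card (Fin m) = m := Fintype.card_fin _
  rw [wRad, wRad, hcard1, hcard2, div_le_div_iff₀ (by positivity) (by positivity)]
  have : (∑ c : Fin m → Bool, wdelta c wb) * 2 ^ (m+1)
      = (∑ c : Fin m → Bool, 2 * wdelta c wb) * 2 ^ m := by
    rw [Finset.sum_mul, Finset.sum_mul]
    refine Finset.sum_congr rfl (fun c _ => ?_)
    ring
  rw [this]
  exact mul_le_mul_of_nonneg_right hsum (by positivity)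

theorem stmt10 (m : ℕ) (w : (Fin (m + 1) → Bool) → ℝ)
    (hw : ∀ x, 0 ≤ w x) (hsupp : ∃ x, 0 < w x) :
    ((∃ x : Fin m → Bool, 0 < w (Fin.snoc x true)) →
      wRad (fun x : Fin m → Bool => w (Fin.snoc x true)) ≤ wRad w) ∧
    ((∃ x : Fin m → Bool, 0 < w (Fin.snoc x false)) →
      wRad (fun x : Fin m → Bool => w (Fin.snoc x false)) ≤ wRad w) := by
  exact ⟨key_s10 m w true, key_s10 m w false⟩
end
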